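/- With the malicious-agent setup, for every λ₀ ∈ (0,1) there exists D ≥ 0 such that for all d > D, the derivative (∂e/∂λ)(λ₀, d) is strictly negative; in particular λ₀ is not a critical point of e(·, d) for any d > D. Consequently, as the noise intensity d → +∞, every critical point λ_CR(d) of e(·, d) in (0,1) tends to 1. -/

import Mathlib

open Matrix
open scoped NNReal

/-- Powers of entrywise-nonnegative matrices are entrywise nonnegative. -/
lemma pow_entry_nonneg {n : Type*} [Fintype n] [DecidableEq n]
    (A : Matrix n n ℝ) (h : ∀ i j, 0 ≤ A i j) (k : ℕ) : ∀ i j, 0 ≤ (A ^ k) i j := by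
  induction k with
  | zero => intro i j; simp [Matrix.one_apply]; positivity
  | succ k ih =>
    intro i j
    rw [pow_succ, Matrix.mul_apply]
    exact Finset.sum_nonneg fun b _ => mul_nonneg (ih i b) (h b j)

lemma isUnit_one_sub_blocks
    {α β : Type*} [Fintype α] [Fintype β] [DecidableEq α] [DecidableEq β] [Nonempty β]
    (W0 : Matrix (α ⊕ β) (α ⊕ β) ℝ) (hsymm : W0.IsSymm) (hnn : ∀ i j, 0 ≤ W0 i j)
    (hrow : ∀ i, ∑ j, W0 i j = 1) (hirr : ∀ i j, ∃ k : ℕ, 0 < (W0 ^ k) i j) :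
    IsUnit (1 - W0.toBlocks₁₁) := by
  have hsym : ∀ a b, W0 a b = W0 b a := fun a b => by
    conv_lhs => rw [← hsymm]
    rfl
  set B := W0.toBlocks₁₁ with hB
  have hBnn : ∀ i j, 0 ≤ B i j := fun i j => hnn _ _
  rw [Matrix.isUnit_iff_isUnit_det, isUnit_iff_ne_zero]
  intro hdet
  obtain ⟨x, hx0, hxv⟩ := (Matrix.exists_mulVec_eq_zero_iff).mpr hdet
  -- fixed point equation
  have hfix : ∀ i, ∑ j, B i j * x j = x i := by
    intro i
    have := congrFun hxv i
    simp [Matrix.mulVec, Matrix.sub_apply, dotProduct, sub_mul, Finset.sum_sub_distrib,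
      Matrix.one_apply, ite_mul] at this
    linarith [this]
  set y : α → ℝ := fun i => |x i| with hy
  have hynn : ∀ i, 0 ≤ y i := fun i => abs_nonneg _
  have hy_sub : ∀ i, y i ≤ ∑ j, B i j * y j := by
    intro i
    calc y i = |∑ j, B i j * x j| := by rw [hfix]
    _ ≤ ∑ j, |B i j * x j| := Finset.abs_sum_le_sum_abs _ _
    _ = ∑ j, B i j * y j := by
        refine Finset.sum_congr rfl fun j _ => ?_
        rw [abs_mul, abs_of_nonneg (hBnn i j)]
  -- column sums of B are ≤ 1, with slack the mass to malicious agents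
  have hcolfull : ∀ j : α, (∑ i : α, B i j) + ∑ m : β, W0 (Sum.inr m) (Sum.inl j) = 1 := by
    intro j
    have := hrow (Sum.inl j)
    rw [Fintype.sum_sum_type] at this
    calc (∑ i : α, B i j) + ∑ m : β, W0 (Sum.inr m) (Sum.inl j)
        = (∑ i : α, W0 (Sum.inl j) (Sum.inl i)) + ∑ m : β, W0 (Sum.inl j) (Sum.inr m) := by
          congr 1
          · exact Finset.sum_congr rfl fun i _ => hsym _ _
          · exact Finset.sum_congr rfl fun m _ => hsym _ _
    _ = 1 := this
  have hcol : ∀ j : α, ∑ i : α, B i j ≤ 1 := by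
    intro j
    have h2 : 0 ≤ ∑ m : β, W0 (Sum.inr m) (Sum.inl j) :=
      Finset.sum_nonneg fun m _ => hnn _ _
    linarith [hcolfull j]
  -- summing: equality everywhere
  have hsum1 : ∑ i, (∑ j, B i j * y j) = ∑ j, (∑ i : α, B i j) * y j := by
    rw [Finset.sum_comm]
    exact Finset.sum_congr rfl fun j _ => by rw [← Finset.sum_mul]
  have hsum2 : ∑ j, (∑ i : α, B i j) * y j ≤ ∑ j, y j :=
    Finset.sum_le_sum fun j _ => by
      calc (∑ i : α, B i j) * y j ≤ 1 * y j :=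
        mul_le_mul_of_nonneg_right (hcol j) (hynn j)
      _ = y j := one_mul _
  have heq : ∀ i, ∑ j, B i j * y j = y i := by
    intro i
    have hterm : ∀ i ∈ Finset.univ, 0 ≤ (∑ j, B i j * y j) - y i :=
      fun i _ => sub_nonneg.mpr (hy_sub i)
    have hs : ∑ i, ((∑ j, B i j * y j) - y i) ≤ 0 := by
      rw [Finset.sum_sub_distrib, hsum1]
      linarith [hsum2]
    have h0 := le_antisymm hs (Finset.sum_nonneg hterm)
    have hall := (Finset.sum_eq_zero_iff_of_nonneg hterm).mp h0
    have := hall i (Finset.mem_univ i)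
    linarith [this]
  -- positive-mass columns have full column sum, hence no mass to malicious agents
  have hslack : ∀ j : α, 0 < y j → ∀ m : β, W0 (Sum.inl j) (Sum.inr m) = 0 := by
    intro j hj m
    have hsl : ∑ j, (1 - ∑ i : α, B i j) * y j = 0 := by
      have h1 : ∑ i, y i = ∑ j, (∑ i : α, B i j) * y j := by
        rw [← hsum1]
        exact (Finset.sum_congr rfl fun i _ => (heq i).symm)
      have : ∑ j, (1 - ∑ i : α, B i j) * y j
          = ∑ j, y j - ∑ j, (∑ i : α, B i j) * y j := by
        rw [← Finset.sum_sub_distrib]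
        exact Finset.sum_congr rfl fun j _ => by ring
      rw [this, ← h1, sub_self]
    have hterm : ∀ j ∈ Finset.univ, 0 ≤ (1 - ∑ i : α, B i j) * y j :=
      fun j _ => mul_nonneg (by linarith [hcol j]) (hynn j)
    have hz := (Finset.sum_eq_zero_iff_of_nonneg hterm).mp hsl j (Finset.mem_univ j)
    have hcol1 : ∑ i : α, B i j = 1 := by
      rcases mul_eq_zero.mp hz with h | h
      · linarith
      · exact absurd h (ne_of_gt hj)
    have hm0 : ∑ m : β, W0 (Sum.inr m) (Sum.inl j) = 0 := by
      have := hcolfull j; linarith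
    have := (Finset.sum_eq_zero_iff_of_nonneg (fun m _ => hnn (Sum.inr m) (Sum.inl j))).mp
      hm0 m (Finset.mem_univ m)
    rw [hsym]; exact this
  -- support propagation within regular agents
  have hkey : ∀ j j' : α, 0 < y j → 0 < B j j' → 0 < y j' := by
    intro j j' hj hB'
    have h1 : B j' j * y j ≤ ∑ k, B j' k * y k :=
      Finset.single_le_sum (f := fun k => B j' k * y k)
        (fun k _ => mul_nonneg (hBnn j' k) (hynn k)) (Finset.mem_univ j)
    have h2 : B j' j = B j j' := hsym _ _
    have h3 : 0 < B j' j * y j := mul_pos (by rw [h2]; exact hB') hj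
    calc (0:ℝ) < B j' j * y j := h3
    _ ≤ ∑ k, B j' k * y k := h1
    _ = y j' := heq j'
  -- pick a positively supported regular agent
  obtain ⟨j₀, hj₀⟩ : ∃ j₀, 0 < y j₀ := by
    obtain ⟨i, hi⟩ := Function.ne_iff.mp hx0
    exact ⟨i, abs_pos.mpr hi⟩
  have hW0pow : ∀ k i j, 0 ≤ (W0 ^ k) i j := pow_entry_nonneg W0 hnn
  -- paths from j₀ stay in the regular positive-support set
  have hind : ∀ k : ℕ, ∀ c, 0 < (W0 ^ k) (Sum.inl j₀) c → ∃ j : α, c = Sum.inl j ∧ 0 < y j := by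
    intro k
    induction k with
    | zero =>
      intro c hc
      rw [pow_zero] at hc
      by_cases h : Sum.inl j₀ = c
      · exact ⟨j₀, h.symm, hj₀⟩
      · rw [Matrix.one_apply_ne h] at hc; exact absurd hc (lt_irrefl 0)
    | succ k ih =>
      intro c hc
      rw [pow_succ, Matrix.mul_apply] at hc
      obtain ⟨b, -, hb⟩ : ∃ b ∈ Finset.univ, 0 < (W0 ^ k) (Sum.inl j₀) b * W0 b c := by
        by_contra h
        push_neg at h
        have : ∑ b, (W0 ^ k) (Sum.inl j₀) b * W0 b c ≤ 0 :=
          Finset.sum_nonpos fun b hbmem => h b hbmem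
        linarith
      have hb1 : 0 < (W0 ^ k) (Sum.inl j₀) b := by
        rcases lt_or_eq_of_le (hW0pow k (Sum.inl j₀) b) with h | h
        · exact h
        · rw [← h, zero_mul] at hb; exact absurd hb (lt_irrefl 0)
      have hb2 : 0 < W0 b c := by
        rcases lt_or_eq_of_le (hnn b c) with h | h
        · exact h
        · rw [← h, mul_zero] at hb; exact absurd hb (lt_irrefl 0)
      obtain ⟨j, rfl, hyj⟩ := ih b hb1
      cases c with
      | inr m =>
        rw [hslack j hyj m] at hb2
        exact absurd hb2 (lt_irrefl 0)
      | inl j' =>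
        exact ⟨j', rfl, hkey j j' hyj hb2⟩
  -- irreducibility reaches a malicious agent: contradiction
  obtain ⟨m₀⟩ := (inferInstance : Nonempty β)
  obtain ⟨k, hk⟩ := hirr (Sum.inl j₀) (Sum.inr m₀)
  obtain ⟨j, hj, -⟩ := hind k _ hk
  cases hj


section Analytic

attribute [local instance] Matrix.linftyOpNormedAddCommGroup Matrix.linftyOpNormedSpace
  Matrix.linftyOpNormedRing Matrix.linftyOpNormedAlgebra

variable {n : Type*} [Fintype n] [DecidableEq n] {m' : Type*} [Fintype m']

local instance : CompleteSpace (Matrix n n ℝ) := FiniteDimensional.complete ℝ _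

/-- The entry-evaluation continuous linear map. -/
noncomputable def entryCLM (i : n) (j : m') : Matrix n m' ℝ →L[ℝ] ℝ :=
  LinearMap.toContinuousLinearMap
    { toFun := fun A => A i j
      map_add' := fun A B => rfl
      map_smul' := fun c A => rfl }

@[simp] lemma entryCLM_apply (i : n) (j : m') (A : Matrix n m' ℝ) : entryCLM i j A = A i j := rfl

lemma linfty_norm_le_one (B : Matrix n n ℝ) (hnn : ∀ i j, 0 ≤ B i j)
    (hrow : ∀ i, ∑ j, B i j ≤ 1) : ‖B‖ ≤ 1 := by
  rw [Matrix.linfty_opNorm_def]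
  have h : ∀ i, (∑ j, ‖B i j‖₊ : ℝ≥0) ≤ 1 := by
    intro i
    rw [← NNReal.coe_le_coe]
    push_cast
    calc ∑ j, (‖B i j‖₊ : ℝ) = ∑ j, B i j := by
          refine Finset.sum_congr rfl fun j _ => ?_
          rw [coe_nnnorm, Real.norm_eq_abs, abs_of_nonneg (hnn i j)]
    _ ≤ 1 := hrow i
  have : ((Finset.univ : Finset n).sup fun i => ∑ j, ‖B i j‖₊) ≤ 1 :=
    Finset.sup_le fun i _ => h i
  exact_mod_cast this


/-- `A(l) = 1 - (1-l)•B`. -/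
noncomputable def Amat (B : Matrix n n ℝ) (l : ℝ) : Matrix n n ℝ := 1 - (1 - l) • B

/-- `N(l) = A(l)⁻¹` (as `Ring.inverse`). -/
noncomputable def Nmat (B : Matrix n n ℝ) (l : ℝ) : Matrix n n ℝ := Ring.inverse (Amat B l)

lemma isUnit_Amat (B : Matrix n n ℝ) (hnn : ∀ i j, 0 ≤ B i j)
    (hrow : ∀ i, ∑ j, B i j ≤ 1) {l : ℝ} (h0 : 0 < l) (h1 : l ≤ 1) :
    IsUnit (Amat B l) := by
  have hnorm : ‖(1 - l) • B‖ < 1 := by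
    rw [norm_smul, Real.norm_eq_abs, abs_of_nonneg (by linarith : (0:ℝ) ≤ 1 - l)]
    calc (1 - l) * ‖B‖ ≤ (1 - l) * 1 :=
      mul_le_mul_of_nonneg_left (linfty_norm_le_one B hnn hrow) (by linarith)
    _ < 1 := by linarith
  exact isUnit_one_sub_of_norm_lt_one hnorm

lemma Amat_mul_Nmat (B : Matrix n n ℝ) {l : ℝ} (h : IsUnit (Amat B l)) :
    Amat B l * Nmat B l = 1 := Ring.mul_inverse_cancel _ h

lemma Nmat_mul_Amat (B : Matrix n n ℝ) {l : ℝ} (h : IsUnit (Amat B l)) :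
    Nmat B l * Amat B l = 1 := Ring.inverse_mul_cancel _ h

lemma Nmat_eq_one_add (B : Matrix n n ℝ) {l : ℝ} (h : IsUnit (Amat B l)) :
    Nmat B l = 1 + (1 - l) • (B * Nmat B l) := by
  have h1 := Amat_mul_Nmat B h
  rw [Amat, sub_mul, one_mul, Matrix.smul_mul, sub_eq_iff_eq_add] at h1
  exact h1

lemma hasDerivAt_Nmat (B : Matrix n n ℝ) {l : ℝ} (h : IsUnit (Amat B l)) :
    HasDerivAt (Nmat B) (-(Nmat B l * B * Nmat B l)) l := by
  obtain ⟨u, hu⟩ := h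
  have hA : HasDerivAt (Amat B) B l := by
    have h1 : HasDerivAt (fun t : ℝ => (1 - t) • B) ((-1 : ℝ) • B) l := by
      have := ((hasDerivAt_id l).const_sub 1).smul_const B
      simp at this ⊢; exact this
    have h2 := h1.const_sub (1 : Matrix n n ℝ)
    simp at h2; exact h2
  have hinv := (hasFDerivAt_ringInverse (𝕜 := ℝ) u)
  rw [hu] at hinv
  have := hinv.comp_hasDerivAt l hA
  refine this.congr_deriv ?_
  have huN : (↑u⁻¹ : Matrix n n ℝ) = Nmat B l := by
    rw [Nmat, ← hu, Ring.inverse_unit]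
  simp [huN]

lemma Nmat_nonneg_of_pos (B : Matrix n n ℝ) (hnn : ∀ i j, 0 ≤ B i j)
    (hrow : ∀ i, ∑ j, B i j ≤ 1) {l : ℝ} (h0 : 0 < l) (h1 : l ≤ 1) :
    ∀ i j, 0 ≤ Nmat B l i j := by
  intro i j
  have hnorm : ‖(1 - l) • B‖ < 1 := by
    rw [norm_smul, Real.norm_eq_abs, abs_of_nonneg (by linarith : (0:ℝ) ≤ 1 - l)]
    calc (1 - l) * ‖B‖ ≤ (1 - l) * 1 :=
      mul_le_mul_of_nonneg_left (linfty_norm_le_one B hnn hrow) (by linarith)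
    _ < 1 := by linarith
  have hsum := hasSum_geom_series_inverse ((1 - l) • B) hnorm
  have hsum2 := hsum.mapL (entryCLM i j)
  have h3 : (0:ℝ) ≤ ∑' k : ℕ, entryCLM i j (((1 - l) • B) ^ k) := by
    refine tsum_nonneg fun k => ?_
    simp only [entryCLM_apply]
    have hnn' : ∀ a b, 0 ≤ ((1 - l) • B) a b := fun a b => by
      have : ((1 - l) • B) a b = (1 - l) * B a b := rfl
      rw [this]
      exact mul_nonneg (by linarith) (hnn a b)
    exact pow_entry_nonneg _ hnn' k i j
  rw [hsum2.tsum_eq] at h3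
  rw [Nmat, Amat]
  exact h3


lemma Nmat_nonneg (B : Matrix n n ℝ) (hnn : ∀ i j, 0 ≤ B i j)
    (hrow : ∀ i, ∑ j, B i j ≤ 1) (hU0 : IsUnit (Amat B 0)) :
    ∀ l ∈ Set.Icc (0:ℝ) 1, ∀ i j, 0 ≤ Nmat B l i j := by
  intro l hl i j
  rcases eq_or_lt_of_le hl.1 with h0 | h0
  · -- l = 0 : by continuity from the right
    have hc : ContinuousAt (Nmat B) 0 := (hasDerivAt_Nmat B hU0).continuousAt
    have hce : ContinuousAt (fun t => Nmat B t i j) 0 :=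
      ((entryCLM i j).continuous.continuousAt).comp hc
    have hev : ∀ᶠ t in nhdsWithin (0:ℝ) (Set.Ioi 0), 0 ≤ Nmat B t i j := by
      filter_upwards [Ioo_mem_nhdsGT_of_mem (by norm_num : (0:ℝ) ∈ Set.Ico (0:ℝ) 1)]
        with t ht
      exact Nmat_nonneg_of_pos B hnn hrow ht.1 (le_of_lt ht.2) i j
    have hlim : Filter.Tendsto (fun t => Nmat B t i j) (nhdsWithin (0:ℝ) (Set.Ioi 0))
        (nhds (Nmat B 0 i j)) := hce.tendsto.mono_left nhdsWithin_le_nhds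
    rw [← h0]
    exact ge_of_tendsto hlim hev
  · exact Nmat_nonneg_of_pos B hnn hrow h0 hl.2 i j

lemma Nmat_diag_ge_one (B : Matrix n n ℝ) {l : ℝ} (h : IsUnit (Amat B l)) (hl : l ≤ 1)
    (hnnB : ∀ i j, 0 ≤ B i j) (hN : ∀ i j, 0 ≤ Nmat B l i j) :
    ∀ i, 1 ≤ Nmat B l i i := by
  intro i
  have h1 := Nmat_eq_one_add B h
  have h2 : Nmat B l i i = 1 + (1 - l) * ((B * Nmat B l) i i) := by
    have := congrFun (congrFun h1 i) i
    simpa [Matrix.add_apply, Matrix.one_apply, Matrix.smul_apply] using this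
  have h3 : 0 ≤ (B * Nmat B l) i i := by
    rw [Matrix.mul_apply]
    exact Finset.sum_nonneg fun k _ => mul_nonneg (hnnB i k) (hN k i)
  nlinarith [h2, h3, mul_nonneg (sub_nonneg.mpr hl) h3]

lemma NN_eq (B : Matrix n n ℝ) {l : ℝ} (h : IsUnit (Amat B l)) :
    Nmat B l * Nmat B l = Nmat B l + (1 - l) • (Nmat B l * B * Nmat B l) := by
  nth_rewrite 2 [Nmat_eq_one_add B h]
  rw [Matrix.mul_add, Matrix.mul_one, Matrix.mul_smul, ← Matrix.mul_assoc]

lemma hasDerivAt_F_entry (B : Matrix n n ℝ) (C : Matrix n m' ℝ) {l : ℝ}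
    (h : IsUnit (Amat B l)) (i : n) (m : m') :
    HasDerivAt (fun t => (1 - t) * ((Nmat B t * C) i m))
      (-((Nmat B l * Nmat B l * C) i m)) l := by
  have hN := hasDerivAt_Nmat B h
  let Φ : Matrix n n ℝ →L[ℝ] ℝ := LinearMap.toContinuousLinearMap
    { toFun := fun X => (X * C) i m
      map_add' := fun X Y => by simp [Matrix.add_mul]
      map_smul' := fun c X => by simp [Matrix.smul_mul] }
  have hNe : HasDerivAt (fun t => (Nmat B t * C) i m)
      ((-(Nmat B l * B * Nmat B l) * C) i m) l := by
    have := Φ.hasFDerivAt.comp_hasDerivAt l hN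
    exact this
  have h1 : HasDerivAt (fun t : ℝ => 1 - t) (-1) l := by
    simpa using (hasDerivAt_id l).const_sub 1
  have h2 := h1.mul hNe
  refine h2.congr_deriv ?_
  have key := congrArg (fun X => X * C) (NN_eq B h)
  simp only [Matrix.add_mul, Matrix.smul_mul] at key
  have key2 := congrFun (congrFun key i) m
  simp only [Matrix.add_apply, Matrix.smul_apply, Matrix.neg_mul, Matrix.neg_apply,
    smul_eq_mul] at key2 ⊢
  ring_nf at key2
  linarith [key2]


variable (B : Matrix n n ℝ) (C : Matrix n m' ℝ)

/-- The squared Frobenius norm of the malicious block of `E`. -/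
noncomputable def qfun (l : ℝ) : ℝ := ∑ i, ∑ m, ((1 - l) * ((Nmat B l * C) i m)) ^ 2

/-- Derivative of `qfun`. -/
noncomputable def qd (l : ℝ) : ℝ :=
  ∑ i, ∑ m, 2 * ((1 - l) * ((Nmat B l * C) i m)) * (-((Nmat B l * Nmat B l * C) i m))

lemma hasDerivAt_qfun {l : ℝ} (h : IsUnit (Amat B l)) :
    HasDerivAt (qfun B C) (qd B C l) l := by
  have hmain : ∀ i ∈ Finset.univ, HasDerivAt (fun t => ∑ m, ((1 - t) * ((Nmat B t * C) i m)) ^ 2)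
      (∑ m, 2 * ((1 - l) * ((Nmat B l * C) i m)) * (-((Nmat B l * Nmat B l * C) i m))) l := by
    intro i _
    refine HasDerivAt.fun_sum fun m _ => ?_
    have hF := (hasDerivAt_F_entry B C h i m).pow 2
    refine hF.congr_deriv ?_
    push_cast
    ring
  exact HasDerivAt.fun_sum hmain

lemma qd_le {l : ℝ} (hl : l ∈ Set.Icc (0:ℝ) 1)
    (hnnB : ∀ i j, 0 ≤ B i j) (hrowB : ∀ i, ∑ j, B i j ≤ 1) (hU0 : IsUnit (Amat B 0))
    (hU : IsUnit (Amat B l)) (hCnn : ∀ i m, 0 ≤ C i m) {i₀ : n} {m₀ : m'}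
    (hc : 0 < C i₀ m₀) :
    qd B C l ≤ -(2 * (1 - l) * (C i₀ m₀) ^ 2) := by
  set N := Nmat B l with hNdef
  have hN : ∀ i j, 0 ≤ N i j := Nmat_nonneg B hnnB hrowB hU0 l hl
  have hdiag : ∀ i, 1 ≤ N i i := Nmat_diag_ge_one B hU hl.2 hnnB hN
  have hNC : ∀ i m, 0 ≤ (N * C) i m := fun i m => by
    rw [Matrix.mul_apply]; exact Finset.sum_nonneg fun k _ => mul_nonneg (hN i k) (hCnn k m)
  have hNN : ∀ i j, 0 ≤ (N * N) i j := fun i j => by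
    rw [Matrix.mul_apply]; exact Finset.sum_nonneg fun k _ => mul_nonneg (hN i k) (hN k j)
  have hNNC : ∀ i m, 0 ≤ (N * N * C) i m := fun i m => by
    rw [Matrix.mul_apply]; exact Finset.sum_nonneg fun k _ => mul_nonneg (hNN i k) (hCnn k m)
  have hNCge : C i₀ m₀ ≤ (N * C) i₀ m₀ := by
    rw [Matrix.mul_apply]
    calc C i₀ m₀ ≤ N i₀ i₀ * C i₀ m₀ := le_mul_of_one_le_left hc.le (hdiag i₀)
    _ ≤ ∑ k, N i₀ k * C k m₀ :=
      Finset.single_le_sum (f := fun k => N i₀ k * C k m₀)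
        (fun k _ => mul_nonneg (hN i₀ k) (hCnn k m₀)) (Finset.mem_univ i₀)
  have hNNdiag : 1 ≤ (N * N) i₀ i₀ := by
    rw [Matrix.mul_apply]
    calc (1:ℝ) ≤ N i₀ i₀ * N i₀ i₀ := one_le_mul_of_one_le_of_one_le (hdiag i₀) (hdiag i₀)
    _ ≤ ∑ k, N i₀ k * N k i₀ :=
      Finset.single_le_sum (f := fun k => N i₀ k * N k i₀)
        (fun k _ => mul_nonneg (hN i₀ k) (hN k i₀)) (Finset.mem_univ i₀)
  have hNNCge : C i₀ m₀ ≤ (N * N * C) i₀ m₀ := by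
    rw [Matrix.mul_apply]
    calc C i₀ m₀ ≤ (N * N) i₀ i₀ * C i₀ m₀ := le_mul_of_one_le_left hc.le hNNdiag
    _ ≤ ∑ k, (N * N) i₀ k * C k m₀ :=
      Finset.single_le_sum (f := fun k => (N * N) i₀ k * C k m₀)
        (fun k _ => mul_nonneg (hNN i₀ k) (hCnn k m₀)) (Finset.mem_univ i₀)
  have hl1 : (0:ℝ) ≤ 1 - l := by linarith [hl.2]
  -- rewrite qd as -2 times a positive sum
  have hqd : qd B C l
      = -(2 * ∑ i, ∑ m, ((1 - l) * ((N * C) i m)) * ((N * N * C) i m)) := by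
    rw [qd, ← hNdef]
    rw [Finset.mul_sum, ← Finset.sum_neg_distrib]
    refine Finset.sum_congr rfl fun i _ => ?_
    rw [Finset.mul_sum, ← Finset.sum_neg_distrib]
    exact Finset.sum_congr rfl fun m _ => by ring
  have hterm : ∀ i m, 0 ≤ ((1 - l) * ((N * C) i m)) * ((N * N * C) i m) := fun i m =>
    mul_nonneg (mul_nonneg hl1 (hNC i m)) (hNNC i m)
  have hsum : (1 - l) * (C i₀ m₀) * (C i₀ m₀)
      ≤ ∑ i, ∑ m, ((1 - l) * ((N * C) i m)) * ((N * N * C) i m) := by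
    calc (1 - l) * (C i₀ m₀) * (C i₀ m₀)
        ≤ ((1 - l) * ((N * C) i₀ m₀)) * ((N * N * C) i₀ m₀) := by
          apply mul_le_mul
          · exact mul_le_mul_of_nonneg_left hNCge hl1
          · exact hNNCge
          · exact hc.le
          · exact mul_nonneg hl1 (hNC i₀ m₀)
    _ ≤ ∑ m, ((1 - l) * ((N * C) i₀ m)) * ((N * N * C) i₀ m) :=
        Finset.single_le_sum (fun m _ => hterm i₀ m) (Finset.mem_univ m₀)
    _ ≤ ∑ i, ∑ m, ((1 - l) * ((N * C) i m)) * ((N * N * C) i m) :=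
        Finset.single_le_sum
          (f := fun i => ∑ m, ((1 - l) * ((N * C) i m)) * ((N * N * C) i m))
          (fun i _ => Finset.sum_nonneg fun m _ => hterm i m) (Finset.mem_univ i₀)
  rw [hqd]
  nlinarith [hsum]

/-- The squared Frobenius norm of the regular block of `E`. -/
noncomputable def pfun (r : ℝ) (l : ℝ) : ℝ := ∑ i, ∑ j, (l * Nmat B l i j - r) ^ 2

/-- Derivative of `pfun`. -/
noncomputable def pd (r : ℝ) (l : ℝ) : ℝ :=
  ∑ i, ∑ j, 2 * (l * Nmat B l i j - r)
    * (Nmat B l i j + l * (-((Nmat B l * B * Nmat B l) i j)))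

lemma hasDerivAt_pfun (r : ℝ) {l : ℝ} (h : IsUnit (Amat B l)) :
    HasDerivAt (pfun B r) (pd B r l) l := by
  have hmain : ∀ i ∈ Finset.univ, HasDerivAt (fun t => ∑ j, (t * Nmat B t i j - r) ^ 2)
      (∑ j, 2 * (l * Nmat B l i j - r)
        * (Nmat B l i j + l * (-((Nmat B l * B * Nmat B l) i j)))) l := by
    intro i _
    refine HasDerivAt.fun_sum fun j _ => ?_
    have hNij : HasDerivAt (fun t => Nmat B t i j) ((-(Nmat B l * B * Nmat B l)) i j) l := by
      have := (entryCLM i j).hasFDerivAt.comp_hasDerivAt l (hasDerivAt_Nmat B h)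
      exact this
    have hfull := (((hasDerivAt_id l).mul hNij).sub_const r).pow 2
    refine hfull.congr_deriv ?_
    simp only [Matrix.neg_apply, id_eq, Pi.mul_apply]
    push_cast
    ring
  exact HasDerivAt.fun_sum hmain

lemma continuousOn_pd (r : ℝ) (hU : ∀ l ∈ Set.Icc (0:ℝ) 1, IsUnit (Amat B l)) :
    ContinuousOn (pd B r) (Set.Icc (0:ℝ) 1) := by
  have hNc : ContinuousOn (Nmat B) (Set.Icc (0:ℝ) 1) := fun l hl =>
    ((hasDerivAt_Nmat B (hU l hl)).continuousAt).continuousWithinAt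
  have hNe : ∀ i j, ContinuousOn (fun l => Nmat B l i j) (Set.Icc (0:ℝ) 1) := fun i j =>
    (entryCLM i j).continuous.comp_continuousOn hNc
  have hNBN : ∀ i j, ContinuousOn (fun l => (Nmat B l * B * Nmat B l) i j)
      (Set.Icc (0:ℝ) 1) := by
    intro i j
    have heq : (fun l => (Nmat B l * B * Nmat B l) i j)
        = fun l => ∑ a, (∑ b, Nmat B l i b * B b a) * Nmat B l a j := by
      funext l
      simp [Matrix.mul_apply]
    rw [heq]
    refine continuousOn_finset_sum _ fun a _ => ContinuousOn.mul ?_ (hNe a j)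
    exact continuousOn_finset_sum _ fun b _ => (hNe i b).mul continuousOn_const
  refine continuousOn_finset_sum _ fun i _ => continuousOn_finset_sum _ fun j _ => ?_
  refine ContinuousOn.mul (ContinuousOn.mul continuousOn_const ?_) ?_
  · exact (continuousOn_id.mul (hNe i j)).sub continuousOn_const
  · exact (hNe i j).add (continuousOn_id.mul (hNBN i j).neg)

end Analytic


/-- In the malicious-agent setup, for every `λ₀ ∈ (0,1)` there is
`D ≥ 0` such that `(∂e/∂λ)(λ₀, d) < 0` for all `d > D` (so `λ₀` is not a critical
point of `e(·, d)` for `d > D`); consequently, as `d → +∞`, every critical point of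
`e(·, d)` in `(0,1)` tends to `1`. -/
theorem critical_points_tend_to_one
    (R M : ℕ) (hR : 2 ≤ R) (hM : 1 ≤ M)
    (W0 : Matrix (Fin R ⊕ Fin M) (Fin R ⊕ Fin M) ℝ)
    (hW0symm : W0.IsSymm)
    (hW0nonneg : ∀ i j, 0 ≤ W0 i j)
    (hW0row : ∀ i, ∑ j, W0 i j = 1)
    (hW0diag : ∀ i, W0 i i = 0)
    (hW0irr : ∀ i j, ∃ k : ℕ, 0 < (W0 ^ k) i j)
    (W : Matrix (Fin R ⊕ Fin M) (Fin R ⊕ Fin M) ℝ)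
    (hW : W = Matrix.fromBlocks W0.toBlocks₁₁ W0.toBlocks₁₂ 0 1)
    (hW12 : W0.toBlocks₁₂ ≠ 0)
    (L : ℝ → Matrix (Fin R ⊕ Fin M) (Fin R ⊕ Fin M) ℝ)
    (hL : ∀ lam : ℝ, L lam = lam • (1 - (1 - lam) • W)⁻¹)
    (S : Matrix (Fin R) (Fin R ⊕ Fin M) ℝ)
    (hS : S = Matrix.of fun i j => if j = Sum.inl i then 1 else 0)
    (CR : Matrix (Fin R) (Fin R) ℝ)
    (hCR : CR = Matrix.of fun _ _ => (R : ℝ)⁻¹)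
    (V : Matrix (Fin R ⊕ Fin M) (Fin R ⊕ Fin M) ℝ)
    (hV : V = Matrix.fromBlocks 0 0 0 1)
    (E : ℝ → Matrix (Fin R) (Fin R ⊕ Fin M) ℝ)
    (hE : ∀ lam : ℝ, E lam = S * L lam - CR * S)
    (e : ℝ → ℝ → ℝ)
    (he : ∀ (lam d : ℝ), e lam d = ((1 + d • V) * (E lam)ᵀ * E lam).trace) :
    (∀ lam0 ∈ Set.Ioo (0 : ℝ) 1, ∃ D : ℝ, 0 ≤ D ∧
        ∀ d : ℝ, D < d → deriv (fun t => e t d) lam0 < 0)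
    ∧ ∀ ε : ℝ, 0 < ε → ∃ D : ℝ, 0 ≤ D ∧
        ∀ d : ℝ, D < d → ∀ lam ∈ Set.Ioo (0 : ℝ) 1,
          deriv (fun t => e t d) lam = 0 → 1 - ε < lam := by
  classical
  have hRpos : 0 < R := by omega
  have hMpos : 0 < M := by omega
  haveI : Nonempty (Fin M) := ⟨⟨0, hMpos⟩⟩
  haveI : Nonempty (Fin R) := ⟨⟨0, hRpos⟩⟩
  set B := W0.toBlocks₁₁ with hBdef
  set C := W0.toBlocks₁₂ with hCdef
  have hBnn : ∀ i j, 0 ≤ B i j := fun i j => hW0nonneg _ _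
  have hCnn : ∀ i m, 0 ≤ C i m := fun i m => hW0nonneg _ _
  have hBrow : ∀ i, ∑ j, B i j ≤ 1 := by
    intro i
    have h := hW0row (Sum.inl i)
    rw [Fintype.sum_sum_type] at h
    have h2 : 0 ≤ ∑ m : Fin M, W0 (Sum.inl i) (Sum.inr m) :=
      Finset.sum_nonneg fun m _ => hW0nonneg _ _
    calc ∑ j, B i j = ∑ j, W0 (Sum.inl i) (Sum.inl j) := rfl
    _ ≤ 1 := by linarith
  obtain ⟨i₀, m₀, hc⟩ : ∃ i₀ m₀, 0 < C i₀ m₀ := by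
    by_contra h
    push_neg at h
    exact hW12 (by ext i m; exact le_antisymm (h i m) (hCnn i m))
  have hU0 : IsUnit (Amat B 0) := by
    have h : Amat B 0 = 1 - B := by rw [Amat]; norm_num
    rw [h]
    exact isUnit_one_sub_blocks W0 hW0symm hW0nonneg hW0row hW0irr
  have hUl : ∀ l ∈ Set.Icc (0:ℝ) 1, IsUnit (Amat B l) := by
    intro l hl
    rcases eq_or_lt_of_le hl.1 with h0 | h0
    · rw [← h0]; exact hU0
    · exact isUnit_Amat B hBnn hBrow h0 hl.2
  set r : ℝ := (R : ℝ)⁻¹ with hrdef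
  -- key identity : on (0,1) the error splits into regular and malicious parts
  have hkey : ∀ l ∈ Set.Ioo (0:ℝ) 1, ∀ d : ℝ,
      e l d = pfun B r l + (1 + d) * qfun B C l := by
    intro l hl d
    have hlpos : 0 < l := hl.1
    have hU := hUl l ⟨hl.1.le, hl.2.le⟩
    have hAN : (1 - (1 - l) • B) * Nmat B l = 1 := by
      have := Amat_mul_Nmat B hU
      rwa [Amat] at this
    set N := Nmat B l with hNdef
    have hinv : (1 - (1 - l) • W)⁻¹
        = Matrix.fromBlocks N ((l⁻¹ * (1 - l)) • (N * C)) 0 (l⁻¹ • 1) := by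
      rw [hW]
      have hblock : (1 : Matrix (Fin R ⊕ Fin M) (Fin R ⊕ Fin M) ℝ)
          - (1 - l) • Matrix.fromBlocks B C 0 1
          = Matrix.fromBlocks (1 - (1 - l) • B) ((-(1 - l)) • C) 0 (l • 1) := by
        rw [← Matrix.fromBlocks_one, Matrix.fromBlocks_smul]
        ext (i | i) (j | j) <;>
          simp [Matrix.fromBlocks, Matrix.one_apply, Matrix.smul_apply, sub_smul]
      rw [hblock]
      apply Matrix.inv_eq_right_inv
      rw [Matrix.fromBlocks_multiply]
      have hTR : (1 - (1 - l) • B) * ((l⁻¹ * (1 - l)) • (N * C))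
          + ((-(1 - l)) • C) * (l⁻¹ • (1 : Matrix (Fin M) (Fin M) ℝ)) = 0 := by
        rw [Matrix.mul_smul, ← Matrix.mul_assoc, hAN, Matrix.one_mul, Matrix.smul_mul,
          Matrix.mul_smul, Matrix.mul_one, smul_smul, ← add_smul]
        have h : l⁻¹ * (1 - l) + -(1 - l) * l⁻¹ = 0 := by ring
        rw [h, zero_smul]
      have hBR : (l • (1 : Matrix (Fin M) (Fin M) ℝ)) * (l⁻¹ • (1 : Matrix (Fin M) (Fin M) ℝ))
          = 1 := by
        rw [Matrix.smul_mul, Matrix.mul_smul, smul_smul, Matrix.mul_one,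
          mul_inv_cancel₀ (ne_of_gt hlpos), one_smul]
      simp only [Matrix.mul_zero, Matrix.zero_mul, add_zero, zero_add, hAN, hTR, hBR,
        Matrix.fromBlocks_one]
    have hLl : L l = Matrix.fromBlocks (l • N) ((1 - l) • (N * C)) 0 1 := by
      have c1 : l * (l⁻¹ * (1 - l)) = 1 - l := by field_simp
      have c2 : l * l⁻¹ = 1 := mul_inv_cancel₀ (ne_of_gt hlpos)
      rw [hL, hinv, Matrix.fromBlocks_smul, smul_zero, smul_smul, smul_smul, c1, c2, one_smul]
    have hEl1 : ∀ i j, E l i (Sum.inl j) = l * N i j - r := by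
      intro i j
      rw [hE, Matrix.sub_apply, hS, hCR]
      have h1 : ((Matrix.of fun (i : Fin R) (j : Fin R ⊕ Fin M) =>
          if j = Sum.inl i then (1:ℝ) else 0)
          * L l) i (Sum.inl j) = L l (Sum.inl i) (Sum.inl j) := by
        rw [Matrix.mul_apply]
        simp [Finset.sum_ite_eq]
      have h2 : ((Matrix.of fun (_ _ : Fin R) => (R : ℝ)⁻¹) *
          Matrix.of fun (i : Fin R) (j : Fin R ⊕ Fin M) => if j = Sum.inl i then (1:ℝ) else 0)
            i (Sum.inl j) = (R:ℝ)⁻¹ := by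
        rw [Matrix.mul_apply]
        simp [Finset.sum_ite_eq']
      rw [h1, h2, hLl]
      simp [Matrix.fromBlocks, Matrix.smul_apply, hrdef]
    have hEl2 : ∀ i m, E l i (Sum.inr m) = (1 - l) * ((N * C) i m) := by
      intro i m
      rw [hE, Matrix.sub_apply, hS, hCR]
      have h1 : ((Matrix.of fun (i : Fin R) (j : Fin R ⊕ Fin M) =>
          if j = Sum.inl i then (1:ℝ) else 0)
          * L l) i (Sum.inr m) = L l (Sum.inl i) (Sum.inr m) := by
        rw [Matrix.mul_apply]
        simp [Finset.sum_ite_eq]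
      have h2 : ((Matrix.of fun (_ _ : Fin R) => (R : ℝ)⁻¹) *
          Matrix.of fun (i : Fin R) (j : Fin R ⊕ Fin M) => if j = Sum.inl i then (1:ℝ) else 0)
            i (Sum.inr m) = 0 := by
        rw [Matrix.mul_apply]
        simp
      rw [h1, h2, hLl]
      simp [Matrix.fromBlocks, Matrix.smul_apply]
    have hVd : ∀ c b, (1 + d • V) c b
        = if c = b then (Sum.elim (fun _ => (1:ℝ)) (fun _ => 1 + d) c) else 0 := by
      intro c b
      rw [hV]
      cases c <;> cases b <;>
        simp [Matrix.add_apply, Matrix.smul_apply, Matrix.one_apply, Matrix.fromBlocks] <;>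
        split_ifs <;> simp_all
    have htr : e l d = ∑ c, (Sum.elim (fun _ => (1:ℝ)) (fun _ => 1 + d) c)
        * ∑ i, (E l i c) ^ 2 := by
      rw [he, Matrix.trace]
      refine Finset.sum_congr rfl fun c _ => ?_
      rw [Matrix.diag, Matrix.mul_apply]
      have h : ∀ b, (((1 + d • V) * (E l)ᵀ : Matrix (Fin R ⊕ Fin M) (Fin R) ℝ)) c b
          = (Sum.elim (fun _ => (1:ℝ)) (fun _ => 1 + d) c) * (E l)ᵀ c b := by
        intro b
        rw [Matrix.mul_apply]
        rw [Finset.sum_eq_single c]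
        · rw [hVd]; simp
        · intro b' _ hb'; rw [hVd]; simp [Ne.symm hb']
        · intro hmem; exact absurd (Finset.mem_univ c) hmem
      rw [Finset.sum_congr rfl fun b _ => by rw [h b]]
      simp only [mul_assoc, Matrix.transpose_apply]
      rw [← Finset.mul_sum]
      congr 1
      refine Finset.sum_congr rfl fun b _ => ?_
      rw [sq]
    rw [htr, Fintype.sum_sum_type]
    simp only [Sum.elim_inl, Sum.elim_inr, one_mul]
    rw [pfun, qfun]
    congr 1
    · rw [Finset.sum_comm]
      exact Finset.sum_congr rfl fun j _ => Finset.sum_congr rfl fun i _ => by rw [hEl1]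
    · rw [← Finset.mul_sum]
      congr 1
      rw [Finset.sum_comm]
      exact Finset.sum_congr rfl fun m _ => Finset.sum_congr rfl fun i _ => by rw [hEl2]
  -- the derivative of e(·,d) on (0,1)
  have hderiv : ∀ d : ℝ, ∀ lam ∈ Set.Ioo (0:ℝ) 1,
      deriv (fun t => e t d) lam = pd B r lam + (1 + d) * qd B C lam := by
    intro d lam hlam
    have hU := hUl lam ⟨hlam.1.le, hlam.2.le⟩
    have hev : (fun t => e t d) =ᶠ[nhds lam] (fun t => pfun B r t + (1 + d) * qfun B C t) := by
      filter_upwards [isOpen_Ioo.mem_nhds hlam] with t ht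
      exact hkey t ht d
    rw [hev.deriv_eq]
    exact ((hasDerivAt_pfun B r hU).add ((hasDerivAt_qfun B C hU).const_mul (1 + d))).deriv
  constructor
  · -- Part 1
    intro lam0 hlam0
    have hlam0' : lam0 ∈ Set.Icc (0:ℝ) 1 := ⟨hlam0.1.le, hlam0.2.le⟩
    set c := C i₀ m₀ with hcdef
    set β₀ : ℝ := 2 * (1 - lam0) * c ^ 2 with hβ₀
    have hβ₀pos : 0 < β₀ := by
      have h1 : 0 < 1 - lam0 := by linarith [hlam0.2]
      have h2 : 0 < c ^ 2 := pow_pos hc 2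
      positivity
    refine ⟨max 0 (|pd B r lam0| / β₀), le_max_left _ _, fun d hd => ?_⟩
    rw [hderiv d lam0 hlam0]
    have hq : qd B C lam0 ≤ -β₀ := by
      have := qd_le B C hlam0' hBnn hBrow hU0 (hUl lam0 hlam0') hCnn hc
      rw [hβ₀]; linarith [this]
    have hd2 : |pd B r lam0| / β₀ < d := lt_of_le_of_lt (le_max_right _ _) hd
    have hd0 : (0:ℝ) < d := lt_of_le_of_lt (le_max_left _ _) hd
    have h1 : |pd B r lam0| < d * β₀ := by
      rw [div_lt_iff₀ hβ₀pos] at hd2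
      linarith
    have h2 : pd B r lam0 ≤ |pd B r lam0| := le_abs_self _
    have h3 : (1 + d) * qd B C lam0 ≤ (1 + d) * (-β₀) :=
      mul_le_mul_of_nonneg_left hq (by linarith)
    have h5 : (1 + d) * (-β₀) = -β₀ - d * β₀ := by ring
    rw [h5] at h3
    linarith
  · -- Part 2
    intro ε hε
    by_cases hε1 : 1 ≤ ε
    · exact ⟨0, le_refl 0, fun d _ lam hlam _ => by linarith [hlam.1]⟩
    · push_neg at hε1
      obtain ⟨Cb, hCb⟩ := isCompact_Icc.exists_bound_of_continuousOn (continuousOn_pd B r hUl)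
      set c := C i₀ m₀ with hcdef
      set β₁ : ℝ := 2 * ε * c ^ 2 with hβ₁
      have hβ₁pos : 0 < β₁ := by
        have h2 : 0 < c ^ 2 := pow_pos hc 2
        positivity
      refine ⟨max 0 (Cb / β₁), le_max_left _ _, fun d hd lam hlam hcrit => ?_⟩
      by_contra hcon
      push_neg at hcon
      have hlam' : lam ∈ Set.Icc (0:ℝ) 1 := ⟨hlam.1.le, hlam.2.le⟩
      have hq := qd_le B C hlam' hBnn hBrow hU0 (hUl lam hlam') hCnn hc
      have hq2 : qd B C lam ≤ -β₁ := by
        have hεlam : ε ≤ 1 - lam := by linarith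
        have h2 : 0 ≤ c ^ 2 := sq_nonneg c
        have h3 : ε * c ^ 2 ≤ (1 - lam) * c ^ 2 := mul_le_mul_of_nonneg_right hεlam h2
        rw [hβ₁]
        linarith
      have hp := hCb lam hlam'
      rw [Real.norm_eq_abs] at hp
      have hd0 : (0:ℝ) < d := lt_of_le_of_lt (le_max_left _ _) hd
      have h1 : Cb / β₁ < d := lt_of_le_of_lt (le_max_right _ _) hd
      have h2 : Cb < d * β₁ := by rwa [div_lt_iff₀ hβ₁pos] at h1
      have heq0 := hderiv d lam hlam
      rw [hcrit] at heq0
      have h3 : (1 + d) * qd B C lam ≤ (1 + d) * (-β₁) :=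
        mul_le_mul_of_nonneg_left hq2 (by linarith)
      have h4 : pd B r lam ≤ |pd B r lam| := le_abs_self _
      have h5 : (1 + d) * (-β₁) = -β₁ - d * β₁ := by ring
      rw [h5] at h3
      linarith
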